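/- A numerical semigroup S with Frobenius number F is irreducible if and only if the set {x ∈ ℕ \ S | F - x ∉ S and 2x ≠ F} is empty. -/
import Mathlib


open Set

/-- A numerical semigroup: contains 0, closed under addition, finite complement. -/
def IsNumSgp (S : Set ℕ) : Prop :=
  0 ∈ S ∧ (∀ a ∈ S, ∀ b ∈ S, a + b ∈ S) ∧ (Sᶜ : Set ℕ).Finite

/-- The multiplicity: least positive element. -/
noncomputable def mult (S : Set ℕ) : ℕ := sInf {n | n ∈ S ∧ n ≠ 0}

/-- next_S(s) = min { x ∈ S | s < x }. -/
noncomputable def nextS (S : Set ℕ) (s : ℕ) : ℕ := sInf {x | x ∈ S ∧ s < x}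

/-- The concentration C(S) = max { next_S(s) - s | s ∈ S \ {0} }. -/
noncomputable def conc (S : Set ℕ) : ℕ :=
  sSup {d | ∃ s ∈ S, s ≠ 0 ∧ d = nextS S s - s}

/-- The Frobenius number: largest gap. -/
noncomputable def frob (S : Set ℕ) : ℕ := sSup (Sᶜ : Set ℕ)

/-- The genus: number of gaps. -/
noncomputable def genus (S : Set ℕ) : ℕ := (Sᶜ : Set ℕ).ncard

/-- x is a minimal generator of S. -/
def IsMinGen (S : Set ℕ) (x : ℕ) : Prop :=
  x ∈ S ∧ x ≠ 0 ∧ ¬∃ a ∈ S, ∃ b ∈ S, a ≠ 0 ∧ b ≠ 0 ∧ a + b = x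

/-- The embedding dimension: number of minimal generators. -/
noncomputable def edim (S : Set ℕ) : ℕ := {x | IsMinGen S x}.ncard

/-- n(S): the number of elements of S smaller than the Frobenius number. -/
noncomputable def nS (S : Set ℕ) : ℕ := {s | s ∈ S ∧ s < frob S}.ncard

/-- The half-line Δ(m) = {0} ∪ {m, m+1, ...}. -/
def Delta (m : ℕ) : Set ℕ := {0} ∪ {n | m ≤ n}

def IsHalfLine (S : Set ℕ) : Prop := ∃ m, S = Delta m

/-- An irreducible numerical semigroup. -/
def Irred (S : Set ℕ) : Prop :=
  ¬∃ T₁ T₂ : Set ℕ, IsNumSgp T₁ ∧ IsNumSgp T₂ ∧ S ⊂ T₁ ∧ S ⊂ T₂ ∧ S = T₁ ∩ T₂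

theorem stmt17 (S : Set ℕ) (hS : IsNumSgp S) (hne : (Sᶜ : Set ℕ).Nonempty) :
    Irred S ↔ {x : ℕ | x ∉ S ∧ frob S - x ∉ S ∧ 2 * x ≠ frob S} = ∅ := by
  obtain ⟨h0, hadd, hfin⟩ := hS
  set F := frob S with hFdef
  have hFmem : F ∈ (Sᶜ : Set ℕ) := hne.csSup_mem hfin
  have hFS : F ∉ S := hFmem
  have hle : ∀ n, n ∉ S → n ≤ F := fun n h => le_csSup hfin.bddAbove h
  have hgt : ∀ n, F < n → n ∈ S := by
    intro n hn
    by_contra h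
    exact absurd (hle n h) (not_le.mpr hn)
  constructor
  · intro hirr
    by_contra hA
    rw [Set.eq_empty_iff_forall_notMem] at hA
    push_neg at hA
    obtain ⟨z, hz⟩ := hA
    set A : Set ℕ := {x : ℕ | x ∉ S ∧ F - x ∉ S ∧ 2 * x ≠ F} with hAdef
    have hAne : A.Nonempty := ⟨z, hz⟩
    have hAfin : A.Finite := hfin.subset (fun y hy => hy.1)
    set x := sSup A with hxdef
    have hxA : x ∈ A := hAne.csSup_mem hAfin
    have hmax : ∀ y ∈ A, y ≤ x := fun y hy => le_csSup hAfin.bddAbove hy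
    obtain ⟨hxS, hFxS, hx2⟩ := hxA
    have hxF : x ≤ F := hle x hxS
    have hxneF : x ≠ F := by
      intro h; apply hFxS; rw [h]; simpa using h0
    have h2x : F < 2 * x := by
      rcases lt_or_gt_of_ne hx2 with h | h
      · exfalso
        have hmem : F - x ∈ A := by
          refine ⟨hFxS, ?_, ?_⟩
          · have : F - (F - x) = x := by omega
            rw [this]; exact hxS
          · omega
        have := hmax _ hmem
        omega
      · exact h
    -- T₁ = insert x S
    have hT1add : ∀ s ∈ S, s + x ∈ insert x S := by
      intro s hs
      rcases Nat.eq_zero_or_pos s with h | h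
      · simp [h]
      · right
        by_contra hsx
        have hsxF : s + x ≤ F := hle _ hsx
        have hmem : s + x ∈ A := by
          refine ⟨hsx, ?_, by omega⟩
          intro hy
          apply hFxS
          have : F - x = (F - (s + x)) + s := by omega
          rw [this]
          exact hadd _ hy _ hs
        have := hmax _ hmem
        omega
    have hT1 : IsNumSgp (insert x S) := by
      refine ⟨Or.inr h0, ?_, hfin.subset (fun y hy => by
        simp only [Set.mem_compl_iff, Set.mem_insert_iff, not_or] at hy ⊢; exact hy.2)⟩
      rintro a (rfl | ha) b (rfl | hb)
      · right; exact hgt _ (by omega)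
      · rw [add_comm]; exact hT1add _ hb
      · exact hT1add _ ha
      · exact Or.inr (hadd _ ha _ hb)
    have hT2 : IsNumSgp (insert F S) := by
      refine ⟨Or.inr h0, ?_, hfin.subset (fun y hy => by
        simp only [Set.mem_compl_iff, Set.mem_insert_iff, not_or] at hy ⊢; exact hy.2)⟩
      rintro a (rfl | ha) b (rfl | hb)
      · right; exact hgt _ (by omega)
      · rcases Nat.eq_zero_or_pos b with h | h
        · simp [h]
        · right; exact hgt _ (by omega)
      · rcases Nat.eq_zero_or_pos a with h | h
        · simp [h]
        · right; exact hgt _ (by omega)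
      · exact Or.inr (hadd _ ha _ hb)
    exact hirr ⟨insert x S, insert F S, hT1, hT2,
      (Set.ssubset_insert hxS), (Set.ssubset_insert hFS), by
      apply Set.Subset.antisymm
      · intro y hy; exact ⟨Or.inr hy, Or.inr hy⟩
      · rintro y ⟨(rfl | hy), (h2 | h2)⟩
        · exact absurd h2 hxneF
        · exact h2
        · exact hy
        · exact hy⟩
  · intro hA ⟨T₁, T₂, h1, h2, hs1, hs2, heq⟩
    have key : ∀ T : Set ℕ, IsNumSgp T → S ⊂ T → F ∈ T := by
      intro T hT hsT
      obtain ⟨y, hyT, hyS⟩ := Set.exists_of_ssubset hsT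
      have hy : y ∉ {x : ℕ | x ∉ S ∧ F - x ∉ S ∧ 2 * x ≠ F} := by rw [hA]; exact id
      simp only [Set.mem_setOf_eq, not_and, not_not] at hy
      have hyF : y ≤ F := hle y hyS
      by_cases h2y : 2 * y = F
      · have := hT.2.1 y hyT y hyT
        rwa [show y + y = F by omega] at this
      · have hFy : F - y ∈ S := by
          by_contra hc
          exact h2y (hy hyS hc)
        have := hT.2.1 _ (hsT.1 hFy) y hyT
        rwa [show F - y + y = F by omega] at this
    have : F ∈ S := by
      rw [heq]; exact ⟨key _ h1 hs1, key _ h2 hs2⟩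
    exact hFS this
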